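/- arXiv:2003.07700 — 8 statements merged into one kernel-verified Lean document; each statement's English description precedes it below -/
import Mathlib

section
/- Let (X,ρ) be a metric space and {A_k} a bounded sequence of nonempty closed subsets of X. Let λ = {λ(n)} be a strictly increasing sequence of positive integers with limsup_{n→∞} λ(n+1)/λ(n) = 1. If {A_k} is Wijsman C_λ summable to A, then {A_k} is Wijsman Cesàro (C_1) summable to A. -/
open Filter Metric

theorem stmt_0 {X : Type*} [MetricSpace X] (A : ℕ → Set X) (S : Set X)
    (hA : ∀ k, (A k).Nonempty ∧ IsClosed (A k)) (hS : S.Nonempty) (hSc : IsClosed S)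
    (hbdd : ∀ x : X, ∃ M : ℝ, ∀ k, infDist x (A k) ≤ M)
    (l : ℕ → ℕ) (hl : StrictMono l) (hl1 : ∀ n, 1 ≤ l n)
    (hlim : Filter.limsup (fun n => (l (n + 1) : ℝ) / (l n : ℝ)) atTop = 1)
    (hsum : ∀ x : X, Tendsto
      (fun n => (1 / (l n : ℝ)) * ∑ k ∈ Finset.Icc 1 (l n), infDist x (A k))
      atTop (nhds (infDist x S))) :
    ∀ x : X, Tendsto
      (fun (n : ℕ) => (1 / (n : ℝ)) * ∑ k ∈ Finset.Icc 1 n, infDist x (A k))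
      atTop (nhds (infDist x S)) := by
  -- boundedness of the ratio sequence
  have hbound : IsBoundedUnder (· ≤ ·) atTop (fun n => (l (n+1) : ℝ) / (l n : ℝ)) := by
    by_contra hb
    have h0 : Filter.limsup (fun n => (l (n+1) : ℝ) / (l n : ℝ)) atTop = 0 := by
      rw [Filter.limsup_eq]
      have : {a : ℝ | ∀ᶠ n in atTop, (l (n+1) : ℝ) / (l n : ℝ) ≤ a} = ∅ := by
        rw [Set.eq_empty_iff_forall_notMem]
        intro a ha
        exact hb ⟨a, eventually_map.mpr ha⟩
      rw [this, Real.sInf_empty]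
    rw [hlim] at h0; norm_num at h0
  have hev : ∀ δ : ℝ, 0 < δ → ∀ᶠ m in atTop, (l (m+1) : ℝ) / (l m : ℝ) < 1 + δ := by
    intro δ hδ
    apply Filter.eventually_lt_of_limsup_lt _ hbound
    rw [hlim]; linarith
  have hle : ∀ k : ℕ, k ≤ l k := fun k => hl.le_apply
  intro x
  obtain ⟨M0, hM0⟩ := hbdd x
  set d : ℕ → ℝ := fun k => infDist x (A k) with hdd
  set L : ℝ := infDist x S with hLL
  set M : ℝ := max M0 0 with hMM
  have hdnn : ∀ k, 0 ≤ d k := fun k => infDist_nonneg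
  have hdM : ∀ k, d k ≤ M := fun k => (hM0 k).trans (le_max_left _ _)
  have hMnn : (0:ℝ) ≤ M := le_max_right _ _
  rw [Metric.tendsto_atTop]
  intro ε hε
  set C : ℝ := M + |L| + 1 with hCC
  have hCpos : 0 < C := by positivity
  set δ : ℝ := ε / (2 * C) with hδδ
  have hδpos : 0 < δ := by positivity
  obtain ⟨N1, hN1⟩ := Metric.tendsto_atTop.mp (hsum x) δ hδpos
  obtain ⟨N2, hN2⟩ := (eventually_atTop.mp (hev δ hδpos))
  set N0 := max N1 N2 with hN0
  refine ⟨l N0, fun n hn => ?_⟩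
  have hN0n : N0 ≤ n := le_trans (hle N0) hn
  set m := Nat.findGreatest (fun k => l k ≤ n) n with hmm
  have hm1 : l m ≤ n := Nat.findGreatest_spec (P := fun k => l k ≤ n) hN0n hn
  have hm2 : N0 ≤ m := Nat.le_findGreatest (P := fun k => l k ≤ n) hN0n hn
  have hm3 : n < l (m+1) := by
    by_cases h : m + 1 ≤ n
    · have := Nat.findGreatest_is_greatest (P := fun k => l k ≤ n)
        (k := m + 1) (Nat.lt_succ_self _) h
      omega
    · exact lt_of_lt_of_le (not_le.mp h) (hle (m+1))
  -- sum splitting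
  have e1 : ∀ b : ℕ, Finset.Icc 1 b = Finset.Ioc 0 b := by
    intro b; ext k; simp only [Finset.mem_Icc, Finset.mem_Ioc]; omega
  have hsplit : (∑ k ∈ Finset.Icc 1 (l m), d k) + (∑ k ∈ Finset.Ioc (l m) n, d k)
      = ∑ k ∈ Finset.Icc 1 n, d k := by
    rw [e1, e1]
    exact Finset.sum_Ioc_consecutive _ (Nat.zero_le _) hm1
  set sA : ℝ := ∑ k ∈ Finset.Icc 1 (l m), d k with hsA
  set T : ℝ := ∑ k ∈ Finset.Ioc (l m) n, d k with hT
  set a : ℝ := (l m : ℝ) with ha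
  have hTnn : 0 ≤ T := Finset.sum_nonneg fun k _ => hdnn k
  have hA1 : (1:ℝ) ≤ a := by rw [ha]; exact_mod_cast hl1 m
  have hAn : a ≤ (n : ℝ) := by rw [ha]; exact_mod_cast hm1
  have hApos : (0:ℝ) < a := lt_of_lt_of_le one_pos hA1
  have hnpos : (0:ℝ) < (n : ℝ) := lt_of_lt_of_le hApos hAn
  have hTle : T ≤ ((n : ℝ) - a) * M := by
    have h := Finset.sum_le_card_nsmul (Finset.Ioc (l m) n) d M (fun k _ => hdM k)
    rw [Nat.card_Ioc, nsmul_eq_mul] at h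
    calc T ≤ ((n - l m : ℕ) : ℝ) * M := h
      _ = ((n : ℝ) - a) * M := by rw [Nat.cast_sub hm1, ha]
  have hratio : ((l (m+1) : ℝ)) / a < 1 + δ := hN2 m (le_trans (le_max_right _ _) hm2)
  have hgap : (n : ℝ) - a < δ * a := by
    have h1 : (n : ℝ) < (l (m+1) : ℝ) := by exact_mod_cast hm3
    have h2 : (l (m+1) : ℝ) < (1 + δ) * a := by
      rw [div_lt_iff₀ hApos] at hratio; exact hratio
    nlinarith
  have hclose : |(1 / a) * sA - L| < δ := by
    have h := hN1 m (le_trans (le_max_left _ _) hm2)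
    rwa [Real.dist_eq] at h
  have hclose' : |sA - L * a| < δ * a := by
    have h2 : sA - L * a = ((1/a) * sA - L) * a := by
      field_simp
    rw [h2, abs_mul, abs_of_pos hApos]
    exact mul_lt_mul_of_pos_right hclose hApos
  have hc := abs_lt.mp hclose'
  have h3 : (0:ℝ) ≤ (n:ℝ) - a := sub_nonneg.mpr hAn
  have p1 : T ≤ δ * a * M :=
    hTle.trans (mul_le_mul_of_nonneg_right hgap.le hMnn)
  have q2 : |L| * ((n:ℝ) - a) ≤ |L| * (δ * a) :=
    mul_le_mul_of_nonneg_left hgap.le (abs_nonneg L)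
  have p2 : L * a - L * (n:ℝ) ≤ |L| * (δ * a) := by
    have q1 : -|L| * ((n:ℝ) - a) ≤ L * ((n:ℝ) - a) :=
      mul_le_mul_of_nonneg_right (neg_abs_le L) h3
    calc L * a - L * (n:ℝ) = -(L * ((n:ℝ) - a)) := by ring
      _ ≤ |L| * ((n:ℝ) - a) := by linarith
      _ ≤ |L| * (δ * a) := q2
  have p3 : L * (n:ℝ) - L * a ≤ |L| * (δ * a) := by
    have q1 : L * ((n:ℝ) - a) ≤ |L| * ((n:ℝ) - a) :=
      mul_le_mul_of_nonneg_right (le_abs_self L) h3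
    calc L * (n:ℝ) - L * a = L * ((n:ℝ) - a) := by ring
      _ ≤ |L| * ((n:ℝ) - a) := q1
      _ ≤ |L| * (δ * a) := q2
  have hCε : δ * C = ε / 2 := by
    rw [hδδ]; field_simp
  have hCε' : δ * a * C = (ε/2) * a := by
    rw [mul_comm δ a, mul_assoc, hCε]; ring
  have expand : δ * a * C = δ * a + δ * a * M + |L| * (δ * a) := by
    rw [hCC]; ring
  have h4 : (ε/2) * a ≤ (ε/2) * (n:ℝ) := mul_le_mul_of_nonneg_left hAn (by positivity)
  have h5 : (ε/2) * (n:ℝ) < ε * (n:ℝ) := by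
    have := mul_pos hε hnpos; linarith
  have hδaM : (0:ℝ) ≤ δ * a * M := by positivity
  have key1 : sA + T - L * (n:ℝ) < ε * (n:ℝ) := by linarith [hc.2]
  have key2 : -(ε * (n:ℝ)) < sA + T - L * (n:ℝ) := by linarith [hc.1]
  rw [Real.dist_eq, ← hsplit]
  have h6 : (1 / (n:ℝ)) * (sA + T) - L = (sA + T - L * (n:ℝ)) / (n:ℝ) := by
    field_simp
  rw [h6, abs_div, abs_of_pos hnpos, div_lt_iff₀ hnpos]
  rw [abs_lt]
  exact ⟨by linarith, by linarith [mul_comm ε (n:ℝ)]⟩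
end

section
/- Let (X,ρ) be a metric space and {A_k} a bounded sequence of nonempty closed subsets of X. Let λ = {λ(n)} and μ = {μ(n)} be strictly increasing sequences of positive integers with lim_{n→∞} μ(n)/λ(n) = 1. Then {A_k} is Wijsman C_λ summable to A if and only if {A_k} is Wijsman C_μ summable to A. -/
open Filter Metric

lemma aux_transfer (a : ℕ → ℝ) (M : ℝ) (ha : ∀ k, 0 ≤ a k) (hM : ∀ k, a k ≤ M)
    (l μ : ℕ → ℕ) (hl1 : ∀ n, 1 ≤ l n) (hμ1 : ∀ n, 1 ≤ μ n)
    (hr : Tendsto (fun n => (l n : ℝ) / (μ n : ℝ)) atTop (nhds 1))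
    (L : ℝ)
    (h : Tendsto (fun n => (1 / (l n : ℝ)) * ∑ k ∈ Finset.Icc 1 (l n), a k) atTop (nhds L)) :
    Tendsto (fun n => (1 / (μ n : ℝ)) * ∑ k ∈ Finset.Icc 1 (μ n), a k) atTop (nhds L) := by
  have hlpos : ∀ n, (0 : ℝ) < l n := fun n => by exact_mod_cast hl1 n
  have hμpos : ∀ n, (0 : ℝ) < μ n := fun n => by exact_mod_cast hμ1 n
  set Ssum : ℕ → ℝ := fun m => ∑ k ∈ Finset.Icc 1 m, a k with hSsum
  -- key bound: |Ssum b - Ssum c| ≤ M * |(b:ℝ) - c| for all b c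
  have key : ∀ b c : ℕ, |Ssum b - Ssum c| ≤ M * |(b : ℝ) - (c : ℝ)| := by
    have base : ∀ b c : ℕ, b ≤ c → Ssum c - Ssum b ≤ M * ((c : ℝ) - b) ∧ 0 ≤ Ssum c - Ssum b := by
      intro b c hbc
      have hIcc : ∀ m : ℕ, Finset.Icc 1 m = Finset.Ioc 0 m := fun m => by
        rw [← Finset.Icc_add_one_left_eq_Ioc, zero_add]
      have hsplit : Ssum b + ∑ k ∈ Finset.Ioc b c, a k = Ssum c := by
        simp only [hSsum, hIcc]
        exact Finset.sum_Ioc_consecutive _ (Nat.zero_le b) hbc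
      have hdiff : Ssum c - Ssum b = ∑ k ∈ Finset.Ioc b c, a k := by linarith
      constructor
      · rw [hdiff]
        calc ∑ k ∈ Finset.Ioc b c, a k ≤ ∑ k ∈ Finset.Ioc b c, M :=
              Finset.sum_le_sum fun k _ => hM k
          _ = (c - b : ℕ) * M := by rw [Finset.sum_const, Nat.card_Ioc]; ring
          _ = M * ((c : ℝ) - b) := by
              rw [Nat.cast_sub hbc]; ring
      · rw [hdiff]; exact Finset.sum_nonneg fun k _ => ha k
    intro b c
    rcases le_total b c with hbc | hcb
    · obtain ⟨h1, h2⟩ := base b c hbc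
      have hbc' : (b : ℝ) ≤ c := by exact_mod_cast hbc
      rw [abs_sub_comm, abs_of_nonneg h2, abs_sub_comm, abs_of_nonneg (by linarith)]
      exact h1
    · obtain ⟨h1, h2⟩ := base c b hcb
      have hcb' : (c : ℝ) ≤ b := by exact_mod_cast hcb
      rw [abs_of_nonneg h2, abs_of_nonneg (by linarith)]
      exact h1
  -- main: f(μ n) = f(l n) * (l n / μ n) + err n
  have hg : Tendsto (fun n => (1 / (l n : ℝ)) * Ssum (l n) * ((l n : ℝ) / (μ n : ℝ)))
      atTop (nhds L) := by
    have := h.mul hr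
    simpa using this
  have herr : Tendsto (fun n => (1 / (μ n : ℝ)) * Ssum (μ n)
      - (1 / (l n : ℝ)) * Ssum (l n) * ((l n : ℝ) / (μ n : ℝ))) atTop (nhds 0) := by
    have hb : Tendsto (fun n => M * |1 - (l n : ℝ) / (μ n : ℝ)|) atTop (nhds 0) := by
      have : Tendsto (fun n => (1 : ℝ) - (l n : ℝ) / (μ n : ℝ)) atTop (nhds 0) := by
        simpa using (tendsto_const_nhds (x := (1:ℝ))).sub hr
      have := (this.abs.const_mul M)
      simpa using this
    apply squeeze_zero_norm _ hb
    intro n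
    have hμn := hμpos n
    have hln := hlpos n
    have heq : (1 / (μ n : ℝ)) * Ssum (μ n)
        - (1 / (l n : ℝ)) * Ssum (l n) * ((l n : ℝ) / (μ n : ℝ))
        = (Ssum (μ n) - Ssum (l n)) / (μ n : ℝ) := by
      field_simp
    rw [Real.norm_eq_abs, heq, abs_div, abs_of_pos hμn, div_le_iff₀ hμn]
    calc |Ssum (μ n) - Ssum (l n)| ≤ M * |(μ n : ℝ) - (l n : ℝ)| := key _ _
      _ = M * |1 - (l n : ℝ) / (μ n : ℝ)| * (μ n : ℝ) := by
          rw [mul_assoc, ← abs_of_pos hμn, ← abs_mul]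
          congr 2
          field_simp
          rw [abs_of_pos hμn]; ring
  have := hg.add herr
  simpa using this

theorem stmt_2 {X : Type*} [MetricSpace X] (A : ℕ → Set X) (S : Set X)
    (hA : ∀ k, (A k).Nonempty ∧ IsClosed (A k)) (hS : S.Nonempty) (hSc : IsClosed S)
    (hbdd : ∀ x : X, ∃ M : ℝ, ∀ k, infDist x (A k) ≤ M)
    (l μ : ℕ → ℕ) (hl : StrictMono l) (hl1 : ∀ n, 1 ≤ l n)
    (hμ : StrictMono μ) (hμ1 : ∀ n, 1 ≤ μ n)
    (hlim : Tendsto (fun n => (μ n : ℝ) / (l n : ℝ)) atTop (nhds 1)) :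
    (∀ x : X, Tendsto
      (fun n => (1 / (l n : ℝ)) * ∑ k ∈ Finset.Icc 1 (l n), infDist x (A k))
      atTop (nhds (infDist x S))) ↔
    (∀ x : X, Tendsto
      (fun n => (1 / (μ n : ℝ)) * ∑ k ∈ Finset.Icc 1 (μ n), infDist x (A k))
      atTop (nhds (infDist x S))) := by
  have hr : Tendsto (fun n => (l n : ℝ) / (μ n : ℝ)) atTop (nhds 1) := by
    have := hlim.inv₀ one_ne_zero
    simpa [inv_div] using this
  constructor
  · intro h x
    obtain ⟨M, hM⟩ := hbdd x
    exact aux_transfer _ M (fun k => infDist_nonneg) hM l μ hl1 hμ1 hr _ (h x)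
  · intro h x
    obtain ⟨M, hM⟩ := hbdd x
    exact aux_transfer _ M (fun k => infDist_nonneg) hM μ l hμ1 hl1 hlim _ (h x)
end

section
/- Let (X,ρ) be a metric space and {A_k} a sequence of nonempty closed subsets of X. Let λ = {λ(n)} be a strictly increasing sequence of positive integers with λ(0) = 0. If {A_k} is Wijsman D_λ summable to A, then {A_k} is Wijsman C_λ summable to A. -/
open Filter Metric

theorem stmt_3 {X : Type*} [MetricSpace X] (A : ℕ → Set X) (S : Set X)
    (hA : ∀ k, (A k).Nonempty ∧ IsClosed (A k)) (hS : S.Nonempty) (hSc : IsClosed S)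
    (l : ℕ → ℕ) (hl : StrictMono l) (hl0 : l 0 = 0)
    (hD : ∀ x : X, Tendsto
      (fun n => (1 / ((l (n + 1) : ℝ) - (l n : ℝ))) *
        ∑ k ∈ Finset.Icc (l n + 1) (l (n + 1)), infDist x (A k))
      atTop (nhds (infDist x S))) :
    ∀ x : X, Tendsto
      (fun n => (1 / (l n : ℝ)) * ∑ k ∈ Finset.Icc 1 (l n), infDist x (A k))
      atTop (nhds (infDist x S)) := by
  intro x
  set L := infDist x S with hL
  set b : ℕ → ℝ := fun j => ∑ k ∈ Finset.Icc (l j + 1) (l (j + 1)), infDist x (A k) with hb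
  set g : ℕ → ℝ := fun j => (l (j + 1) : ℝ) - (l j : ℝ) with hg
  have hg_pos : ∀ j, 0 < g j := fun j => by
    have := hl (Nat.lt_succ_self j)
    simp only [hg, sub_pos]
    exact_mod_cast this
  have hsum_g : ∀ n, ∑ j ∈ Finset.range n, g j = (l n : ℝ) := by
    intro n
    rw [Finset.sum_range_sub (fun j => (l j : ℝ))]
    simp [hl0]
  have hsum_b : ∀ n, ∑ j ∈ Finset.range n, b j
      = ∑ k ∈ Finset.Icc 1 (l n), infDist x (A k) := by
    intro n
    induction n with
    | zero => simp [hl0]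
    | succ n ih =>
      rw [Finset.sum_range_succ, ih]
      have h1 : Finset.Icc 1 (l n) = Finset.Ioc 0 (l n) := Finset.Icc_add_one_left_eq_Ioc 0 (l n)
      have h2 : Finset.Icc (l n + 1) (l (n + 1)) = Finset.Ioc (l n) (l (n + 1)) :=
        Finset.Icc_add_one_left_eq_Ioc _ _
      have h3 : Finset.Icc 1 (l (n + 1)) = Finset.Ioc 0 (l (n + 1)) := Finset.Icc_add_one_left_eq_Ioc _ _
      rw [h1, h3, hb]
      simp only [h2]
      exact Finset.sum_Ioc_consecutive _ (Nat.zero_le _) (hl (Nat.lt_succ_self n)).le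
  have hltop : Tendsto (fun n => (l n : ℝ)) atTop atTop :=
    tendsto_natCast_atTop_atTop.comp hl.tendsto_atTop
  have hgo : Tendsto (fun n => ∑ j ∈ Finset.range n, g j) atTop atTop := by
    simpa only [hsum_g] using hltop
  -- ratio tendsto
  have hratio : Tendsto (fun j => b j / g j - L) atTop (nhds 0) := by
    have := hD x
    have h' : Tendsto (fun j => b j / g j) atTop (nhds L) := by
      refine this.congr fun j => ?_
      rw [one_div, div_eq_mul_inv, mul_comm]
    simpa using h'.sub_const L
  have hlo : (fun j => b j - L * g j) =o[atTop] g := by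
    rw [Asymptotics.isLittleO_iff]
    intro ε hε
    filter_upwards [Metric.tendsto_nhds.mp hratio ε hε] with j hj
    have hgj := hg_pos j
    rw [Real.dist_eq, sub_zero] at hj
    have : b j - L * g j = (b j / g j - L) * g j := by
      field_simp
    rw [this, norm_mul]
    gcongr
    simpa [Real.norm_eq_abs] using hj.le
  have hsumlo := hlo.sum_range (fun j => (hg_pos j).le) hgo
  have hsumlo' : (fun n => (∑ j ∈ Finset.range n, b j) - L * (l n : ℝ)) =o[atTop]
      fun n => (l n : ℝ) := by
    have := hsumlo
    simp only [Finset.sum_sub_distrib, ← Finset.mul_sum, hsum_g] at this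
    simpa [hsum_g] using this
  have htend := hsumlo'.tendsto_div_nhds_zero
  have hev : ∀ᶠ n in atTop, ((∑ j ∈ Finset.range n, b j) - L * (l n : ℝ)) / (l n : ℝ) + L
      = (1 / (l n : ℝ)) * ∑ k ∈ Finset.Icc 1 (l n), infDist x (A k) := by
    filter_upwards [hltop.eventually_gt_atTop 0] with n hn
    rw [← hsum_b]
    field_simp
    ring
  rw [show nhds L = nhds (0 + L) by rw [zero_add]]
  exact Tendsto.congr' hev (htend.add_const L)
end

section
/- Let (X,ρ) be a metric space, λ = {λ(n)} a strictly increasing sequence of positive integers with λ(0) = 0 and liminf_{n→∞} λ(n)/λ(n−1) > 1. Then for any sequence {A_k} of nonempty closed subsets of X: if {A_k} is Wijsman C_λ summable to A, then {A_k} is Wijsman D_λ summable to A. -/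
open Filter Metric

theorem stmt_4 {X : Type*} [MetricSpace X] (A : ℕ → Set X) (S : Set X)
    (hA : ∀ k, (A k).Nonempty ∧ IsClosed (A k)) (hS : S.Nonempty) (hSc : IsClosed S)
    (l : ℕ → ℕ) (hl : StrictMono l) (hl0 : l 0 = 0)
    (hliminf : 1 < Filter.liminf (fun n => (l (n + 1) : ℝ) / (l n : ℝ)) atTop)
    (hC : ∀ x : X, Tendsto
      (fun n => (1 / (l n : ℝ)) * ∑ k ∈ Finset.Icc 1 (l n), infDist x (A k))
      atTop (nhds (infDist x S))) :
    ∀ x : X, Tendsto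
      (fun n => (1 / ((l (n + 1) : ℝ) - (l n : ℝ))) *
        ∑ k ∈ Finset.Icc (l n + 1) (l (n + 1)), infDist x (A k))
      atTop (nhds (infDist x S)) := by
  intro x
  set d : ℕ → ℝ := fun k => infDist x (A k) with hd
  set T : ℕ → ℝ := fun n => ∑ k ∈ Finset.Icc 1 (l n), d k with hT
  set a : ℕ → ℝ := fun n => (1 / (l n : ℝ)) * T n with ha
  have haD : Tendsto a atTop (nhds (infDist x S)) := hC x
  -- l n ≥ n
  have hln : ∀ n, n ≤ l n := fun n => by
    induction n with
    | zero => exact Nat.zero_le _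
    | succ m ih => exact Nat.succ_le_of_lt (lt_of_le_of_lt ih (hl (Nat.lt_succ_self m)))
  -- block sum decomposition
  have hsum : ∀ n, ∑ k ∈ Finset.Icc (l n + 1) (l (n + 1)), d k = T (n + 1) - T n := by
    intro n
    have h01 : Finset.Icc 1 (l n) = Finset.Ioc 0 (l n) := by
      rw [← Finset.Icc_add_one_left_eq_Ioc, zero_add]
    have h02 : Finset.Icc 1 (l (n + 1)) = Finset.Ioc 0 (l (n + 1)) := by
      rw [← Finset.Icc_add_one_left_eq_Ioc, zero_add]
    have h03 : Finset.Icc (l n + 1) (l (n + 1)) = Finset.Ioc (l n) (l (n + 1)) := by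
      rw [← Finset.Icc_add_one_left_eq_Ioc]
    have hcons := Finset.sum_Ioc_consecutive (fun k => d k) (Nat.zero_le (l n))
      (le_of_lt (hl (Nat.lt_succ_self n)))
    simp only [hT, h01, h02, h03]
    linarith [hcons]
  -- choose c with 1 < c < liminf
  obtain ⟨c, hc1, hcl⟩ : ∃ c : ℝ, 1 < c ∧ ∀ᶠ n in atTop, c < (l (n + 1) : ℝ) / (l n : ℝ) := by
    refine ⟨(1 + Filter.liminf (fun n => (l (n + 1) : ℝ) / (l n : ℝ)) atTop) / 2,
      by linarith, ?_⟩
    refine Filter.eventually_lt_of_lt_liminf (by linarith) ?_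
    exact Filter.isBoundedUnder_of ⟨0, fun n =>
      ge_iff_le.mpr (div_nonneg (Nat.cast_nonneg _) (Nat.cast_nonneg _))⟩
  -- error term
  set e : ℕ → ℝ := fun n => ((l n : ℝ) / ((l (n + 1) : ℝ) - (l n : ℝ))) * (a (n + 1) - a n)
    with he
  have hkey : ∀ᶠ n in atTop, 0 < (l n : ℝ) ∧ (c - 1) * (l n : ℝ) < (l (n + 1) : ℝ) - (l n : ℝ) := by
    filter_upwards [hcl, Filter.eventually_ge_atTop 1] with n hcn hn1
    have hL : (0 : ℝ) < (l n : ℝ) := by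
      have : 1 ≤ l n := le_trans hn1 (hln n)
      exact_mod_cast Nat.lt_of_lt_of_le Nat.zero_lt_one this
    have hmul : c * (l n : ℝ) < (l (n + 1) : ℝ) := (lt_div_iff₀ hL).mp hcn
    exact ⟨hL, by nlinarith⟩
  -- e tends to 0
  have hdiff : Tendsto (fun n => a (n + 1) - a n) atTop (nhds 0) := by
    have h1 : Tendsto (fun n => a (n + 1)) atTop (nhds (infDist x S)) :=
      haD.comp (tendsto_add_atTop_nat 1)
    simpa using h1.sub haD
  have he0 : Tendsto e atTop (nhds 0) := by
    apply squeeze_zero_norm' (a := fun n => (1 / (c - 1)) * |a (n + 1) - a n|)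
    · filter_upwards [hkey] with n hn
      obtain ⟨hL, hgap⟩ := hn
      have hgap0 : (0 : ℝ) < (l (n + 1) : ℝ) - (l n : ℝ) := by nlinarith
      have hratio : (l n : ℝ) / ((l (n + 1) : ℝ) - (l n : ℝ)) ≤ 1 / (c - 1) := by
        rw [div_le_div_iff₀ hgap0 (by linarith)]
        nlinarith
      have hratio0 : 0 ≤ (l n : ℝ) / ((l (n + 1) : ℝ) - (l n : ℝ)) :=
        div_nonneg hL.le hgap0.le
      have : ‖e n‖ = ((l n : ℝ) / ((l (n + 1) : ℝ) - (l n : ℝ))) * |a (n + 1) - a n| := by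
        rw [he]
        simp only [Real.norm_eq_abs, abs_mul, abs_of_nonneg hratio0]
      rw [this]
      exact mul_le_mul_of_nonneg_right hratio (abs_nonneg _)
    · have : Tendsto (fun n => |a (n + 1) - a n|) atTop (nhds 0) := by
        simpa using hdiff.abs
      simpa using this.const_mul (1 / (c - 1))
  -- main congruence
  have heq : ∀ᶠ n in atTop,
      (1 / ((l (n + 1) : ℝ) - (l n : ℝ))) * ∑ k ∈ Finset.Icc (l n + 1) (l (n + 1)), d k
        = a (n + 1) + e n := by
    filter_upwards [hkey] with n hn
    obtain ⟨hL, hgap⟩ := hn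
    have hL' : (0 : ℝ) < (l (n + 1) : ℝ) := by
      nlinarith
    have hgap0 : (0 : ℝ) < (l (n + 1) : ℝ) - (l n : ℝ) := by nlinarith
    have key : ∀ (L L' T1 T2 : ℝ), L ≠ 0 → L' ≠ 0 → L' - L ≠ 0 →
        (1 / (L' - L)) * (T2 - T1)
          = (1 / L') * T2 + (L / (L' - L)) * ((1 / L') * T2 - (1 / L) * T1) := by
      intro L L' T1 T2 h1 h2 h3
      field_simp
      ring
    rw [hsum n]
    simp only [ha, he]
    exact key _ _ _ _ hL.ne' hL'.ne' hgap0.ne'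
  have hfinal : Tendsto (fun n => a (n + 1) + e n) atTop (nhds (infDist x S)) := by
    have h1 : Tendsto (fun n => a (n + 1)) atTop (nhds (infDist x S)) :=
      haD.comp (tendsto_add_atTop_nat 1)
    simpa using h1.add he0
  exact hfinal.congr' (Filter.EventuallyEq.symm heq)
end

section
/- Let (X,ρ) be a metric space, {A_k} a bounded sequence of nonempty closed subsets of X, and λ = {λ(n)} a strictly increasing sequence of positive integers with limsup_{n→∞} λ(n+1)/λ(n) = 1. Then {A_k} is Wijsman statistically convergent to A if and only if {A_k} is Wijsman C_λ statistically convergent to A. -/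
open Filter Metric

theorem stmt_6 {X : Type*} [MetricSpace X] (A : ℕ → Set X) (S : Set X)
    (hA : ∀ k, (A k).Nonempty ∧ IsClosed (A k)) (hS : S.Nonempty) (hSc : IsClosed S)
    (hbdd : ∀ x : X, ∃ M : ℝ, ∀ k, infDist x (A k) ≤ M)
    (l : ℕ → ℕ) (hl : StrictMono l) (hl1 : ∀ n, 1 ≤ l n)
    (hlim : Filter.limsup (fun n => (l (n + 1) : ℝ) / (l n : ℝ)) atTop = 1) :
    (∀ ε > (0 : ℝ), ∀ x : X, Tendsto
      (fun n => (((Finset.Icc 1 n).filter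
        (fun k => ε ≤ |infDist x (A k) - infDist x S|)).card : ℝ) / (n : ℝ))
      atTop (nhds 0)) ↔
    (∀ ε > (0 : ℝ), ∀ x : X, Tendsto
      (fun n => (((Finset.Icc 1 (l n)).filter
        (fun k => ε ≤ |infDist x (A k) - infDist x S|)).card : ℝ) / (l n : ℝ))
      atTop (nhds 0)) := by
  -- l m ≥ m + 1
  have hge : ∀ m, m + 1 ≤ l m := by
    intro m
    induction m with
    | zero => exact hl1 0
    | succ n ih => have : l n < l (n + 1) := hl (by omega); omega
  constructor
  · intro h ε hε x
    exact (h ε hε x).comp hl.tendsto_atTop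
  · intro h ε hε x
    -- ratio eventually < 2
    set u : ℕ → ℝ := fun n => (l (n + 1) : ℝ) / (l n : ℝ) with hu
    have hset : {a : ℝ | ∀ᶠ n in atTop, u n ≤ a}.Nonempty := by
      by_contra hne
      rw [Set.not_nonempty_iff_eq_empty] at hne
      rw [Filter.limsup_eq, hne, Real.sInf_empty] at hlim
      norm_num at hlim
    obtain ⟨a, ha⟩ := hset
    have hbd : IsBoundedUnder (· ≤ ·) atTop u := ⟨a, eventually_map.2 ha⟩
    have hev : ∀ᶠ n in atTop, u n < 2 := by
      apply eventually_lt_of_limsup_lt _ hbd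
      rw [hlim]; norm_num
    obtain ⟨N₁, hN₁⟩ := eventually_atTop.1 hev
    have h2 := h ε hε x
    rw [Metric.tendsto_atTop] at h2 ⊢
    intro ε' hε'
    obtain ⟨N₂, hN₂⟩ := h2 (ε' / 2) (by linarith)
    set c : ℕ → ℕ := fun n => ((Finset.Icc 1 n).filter
        (fun k => ε ≤ |infDist x (A k) - infDist x S|)).card with hc
    refine ⟨l (max N₁ N₂), fun n hn => ?_⟩
    set N := max N₁ N₂
    -- find m with l m ≤ n < l (m+1)
    set P : ℕ → Prop := fun m => l m ≤ n with hP
    have hPN : P N := hn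
    have hNn : N ≤ n := le_trans (by have := hge N; omega) hn
    set m := Nat.findGreatest P n with hm
    have hPm : P m := Nat.findGreatest_spec hNn hPN
    have hNm : N ≤ m := Nat.le_findGreatest hNn hPN
    have hmn : m + 1 ≤ n := le_trans (hge m) hPm
    have hnot : ¬ P (m + 1) := Nat.findGreatest_is_greatest (Nat.lt_succ_self m) hmn
    have hlt : n < l (m + 1) := by omega
    -- key facts as reals
    have hratio : u m < 2 := hN₁ m (le_trans (le_max_left _ _) hNm)
    have hcard : (c (l (m + 1)) : ℝ) / (l (m + 1) : ℝ) < ε' / 2 := by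
      have := hN₂ (m + 1) (by omega)
      rw [Real.dist_eq, sub_zero, abs_of_nonneg (by positivity)] at this
      exact this
    have hpm : (0 : ℝ) < (l m : ℝ) := by exact_mod_cast Nat.lt_of_lt_of_le Nat.zero_lt_one (hl1 m)
    have hq : (0 : ℝ) < (l (m + 1) : ℝ) := by exact_mod_cast Nat.lt_of_lt_of_le Nat.zero_lt_one (hl1 (m+1))
    have hcn : (c n : ℝ) ≤ (c (l (m + 1)) : ℝ) := by
      exact_mod_cast Finset.card_le_card (Finset.filter_subset_filter _
        (Finset.Icc_subset_Icc_right (le_of_lt hlt)))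
    have hpn : (l m : ℝ) ≤ (n : ℝ) := by exact_mod_cast hPm
    have hnpos : (0 : ℝ) < (n : ℝ) := lt_of_lt_of_le hpm hpn
    have hq2 : (l (m + 1) : ℝ) < 2 * (l m : ℝ) := by
      rw [hu, div_lt_iff₀ hpm] at hratio; linarith
    have hb : (c (l (m + 1)) : ℝ) < ε' / 2 * (l (m + 1) : ℝ) := by
      rw [div_lt_iff₀ hq] at hcard; exact hcard
    rw [Real.dist_eq, sub_zero, abs_of_nonneg (by positivity)]
    have hcnn : (0 : ℝ) ≤ (c (l (m+1)) : ℝ) := Nat.cast_nonneg _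
    calc (c n : ℝ) / (n : ℝ) ≤ (c (l (m + 1)) : ℝ) / (l m : ℝ) :=
          div_le_div₀ hcnn hcn hpm hpn
      _ < ε' := by rw [div_lt_iff₀ hpm]; nlinarith
end

section
/- Let (X,ρ) be a metric space, I an admissible ideal on ℕ, λ a strictly increasing sequence of positive integers, and p > 0. If a sequence {A_k} of nonempty closed subsets of X is Wijsman p-strongly I-C_λ summable to A, then it is Wijsman I-C_λ statistically convergent to A. -/
open Filter Metric

theorem stmt_10 {X : Type*} [MetricSpace X] (A : ℕ → Set X) (S : Set X)
    (hA : ∀ k, (A k).Nonempty ∧ IsClosed (A k)) (hS : S.Nonempty) (hSc : IsClosed S)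
    (I : Set (Set ℕ)) (hempty : ∅ ∈ I)
    (hsub : ∀ ⦃a b : Set ℕ⦄, a ∈ I → b ⊆ a → b ∈ I)
    (hunion : ∀ ⦃a b : Set ℕ⦄, a ∈ I → b ∈ I → a ∪ b ∈ I)
    (huniv : (Set.univ : Set ℕ) ∉ I) (hsing : ∀ n : ℕ, ({n} : Set ℕ) ∈ I)
    (l : ℕ → ℕ) (hl : StrictMono l) (hl1 : ∀ n, 1 ≤ l n)
    (p : ℝ) (hp : 0 < p)
    (hstrong : ∀ ε > (0 : ℝ), ∀ x : X,
      {n : ℕ | ε ≤ (1 / (l n : ℝ)) *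
        ∑ k ∈ Finset.Icc 1 (l n), |infDist x (A k) - infDist x S| ^ p} ∈ I) :
    ∀ ε > (0 : ℝ), ∀ δ > (0 : ℝ), ∀ x : X,
      {n : ℕ | δ ≤ (((Finset.Icc 1 (l n)).filter
        (fun k => ε ≤ |infDist x (A k) - infDist x S|)).card : ℝ) / (l n : ℝ)} ∈ I := by
  intro ε hε δ hδ x
  have hεp : (0:ℝ) < ε ^ p := Real.rpow_pos_of_pos hε p
  apply hsub (hstrong (ε ^ p * δ) (mul_pos hεp hδ) x)
  intro n hn
  simp only [Set.mem_setOf_eq] at hn ⊢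
  have hln : (0:ℝ) < (l n : ℝ) := by exact_mod_cast hl1 n
  set F := (Finset.Icc 1 (l n)).filter (fun k => ε ≤ |infDist x (A k) - infDist x S|)
  have h1 : (F.card : ℝ) * ε ^ p ≤ ∑ k ∈ Finset.Icc 1 (l n),
      |infDist x (A k) - infDist x S| ^ p := by
    calc (F.card : ℝ) * ε ^ p = ∑ _k ∈ F, ε ^ p := by
          rw [Finset.sum_const, nsmul_eq_mul]
      _ ≤ ∑ k ∈ F, |infDist x (A k) - infDist x S| ^ p := by
          refine Finset.sum_le_sum fun k hk => ?_
          have := (Finset.mem_filter.mp hk).2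
          exact Real.rpow_le_rpow hε.le this hp.le
      _ ≤ _ := Finset.sum_le_sum_of_subset_of_nonneg (Finset.filter_subset _ _)
          (fun k _ _ => Real.rpow_nonneg (abs_nonneg _) p)
  calc ε ^ p * δ ≤ ε ^ p * ((F.card : ℝ) / (l n : ℝ)) := by
        exact mul_le_mul_of_nonneg_left hn hεp.le
    _ = (1 / (l n : ℝ)) * ((F.card : ℝ) * ε ^ p) := by ring
    _ ≤ _ := by
        exact mul_le_mul_of_nonneg_left h1 (by positivity)
end

section
/- Let (X,ρ) be a metric space, I an admissible ideal on ℕ, λ a strictly increasing sequence of positive integers, p > 0, and {A_k} a bounded sequence of nonempty closed subsets of X. If {A_k} is Wijsman I-C_λ statistically convergent to A, then {A_k} is Wijsman p-strongly I-C_λ summable to A. -/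
open Filter Metric

theorem stmt_11 {X : Type*} [MetricSpace X] (A : ℕ → Set X) (S : Set X)
    (hA : ∀ k, (A k).Nonempty ∧ IsClosed (A k)) (hS : S.Nonempty) (hSc : IsClosed S)
    (I : Set (Set ℕ)) (hempty : ∅ ∈ I)
    (hsub : ∀ ⦃a b : Set ℕ⦄, a ∈ I → b ⊆ a → b ∈ I)
    (hunion : ∀ ⦃a b : Set ℕ⦄, a ∈ I → b ∈ I → a ∪ b ∈ I)
    (huniv : (Set.univ : Set ℕ) ∉ I) (hsing : ∀ n : ℕ, ({n} : Set ℕ) ∈ I)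
    (l : ℕ → ℕ) (hl : StrictMono l) (hl1 : ∀ n, 1 ≤ l n)
    (p : ℝ) (hp : 0 < p)
    (hbdd : ∀ x : X, ∃ α > (0 : ℝ), ∀ k, |infDist x (A k) - infDist x S| < α)
    (hstat : ∀ ε > (0 : ℝ), ∀ δ > (0 : ℝ), ∀ x : X,
      {n : ℕ | δ ≤ (((Finset.Icc 1 (l n)).filter
        (fun k => ε ≤ |infDist x (A k) - infDist x S|)).card : ℝ) / (l n : ℝ)} ∈ I) :
    ∀ ε > (0 : ℝ), ∀ x : X,
      {n : ℕ | ε ≤ (1 / (l n : ℝ)) *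
        ∑ k ∈ Finset.Icc 1 (l n), |infDist x (A k) - infDist x S| ^ p} ∈ I := by
  intro ε hε x
  obtain ⟨α, hα, hαk⟩ := hbdd x
  have hαp : (0:ℝ) < α ^ p := Real.rpow_pos_of_pos hα p
  set ε' : ℝ := (ε/2) ^ (1/p) with hε'def
  have hε'pos : 0 < ε' := Real.rpow_pos_of_pos (by linarith) _
  have hε'p : ε' ^ p = ε/2 := by
    rw [hε'def, ← Real.rpow_mul (by linarith), one_div_mul_cancel hp.ne', Real.rpow_one]
  set δ : ℝ := ε/(2*α^p) with hδdef
  have hδ : 0 < δ := by positivity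
  refine hsub (hstat ε' hε'pos δ hδ x) ?_
  intro n hn
  simp only [Set.mem_setOf_eq] at hn ⊢
  by_contra hc
  push_neg at hc
  set d : ℕ → ℝ := fun k => |infDist x (A k) - infDist x S| with hd
  have hln : (0:ℝ) < (l n : ℝ) := by exact_mod_cast (hl1 n)
  set F := Finset.Icc 1 (l n) with hF
  set B := F.filter (fun k => ε' ≤ d k) with hB
  have hsplit : ∑ k ∈ F, d k ^ p =
      (∑ k ∈ B, d k ^ p) + ∑ k ∈ F.filter (fun k => ¬ ε' ≤ d k), d k ^ p :=
    (Finset.sum_filter_add_sum_filter_not F _ _).symm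
  have hbig : ∑ k ∈ B, d k ^ p ≤ (B.card : ℝ) * α ^ p := by
    rw [← nsmul_eq_mul]
    refine Finset.sum_le_card_nsmul _ _ _ ?_
    intro k _
    exact Real.rpow_le_rpow (abs_nonneg _) (hαk k).le hp.le
  have hsmall : ∑ k ∈ F.filter (fun k => ¬ ε' ≤ d k), d k ^ p ≤ (l n : ℝ) * (ε/2) := by
    have h1 : ∑ k ∈ F.filter (fun k => ¬ ε' ≤ d k), d k ^ p ≤
        ((F.filter (fun k => ¬ ε' ≤ d k)).card : ℝ) * (ε/2) := by
      rw [← nsmul_eq_mul]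
      refine Finset.sum_le_card_nsmul _ _ _ ?_
      intro k hk
      simp only [Finset.mem_filter, not_le] at hk
      rw [← hε'p]
      exact Real.rpow_le_rpow (abs_nonneg _) hk.2.le hp.le
    refine h1.trans ?_
    have hcard : ((F.filter (fun k => ¬ ε' ≤ d k)).card : ℝ) ≤ (l n : ℝ) := by
      have := Finset.card_filter_le F (fun k => ¬ ε' ≤ d k)
      have hFc : F.card = l n := by simp [hF]
      exact_mod_cast hFc ▸ this
    nlinarith
  have hBcard : (B.card : ℝ) * α ^ p < (l n : ℝ) * (ε/2) := by
    have : (B.card : ℝ) < δ * (l n : ℝ) := by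
      rw [div_lt_iff₀ hln] at hc; exact hc
    have hδα : δ * α ^ p = ε/2 := by
      rw [hδdef]; field_simp
    nlinarith
  have : (1 / (l n : ℝ)) * ∑ k ∈ F, d k ^ p < ε := by
    rw [hsplit]
    have hsum : (∑ k ∈ B, d k ^ p) + ∑ k ∈ F.filter (fun k => ¬ ε' ≤ d k), d k ^ p
        < (l n : ℝ) * ε := by nlinarith
    rw [one_div, inv_mul_lt_iff₀ hln] at *
    linarith [hsum]
  exact absurd hn (not_le.mpr this)
end

section
/- Let (X,ρ) be a metric space and {A_k} a bounded sequence of nonempty closed subsets of X. Let λ, μ be strictly increasing sequences of positive integers with lim_{n→∞} n/λ(n) > 0 and lim_{n→∞} n/μ(n) > 0. Then {A_k} is Wijsman C_λ summable to A if and only if it is Wijsman C_μ summable to A. -/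
open Filter Metric

private lemma icc_eq_ioc (n : ℕ) : Finset.Icc 1 n = Finset.Ioc 0 n := Finset.Icc_add_one_left_eq_Ioc 0 n

/-- Pure real arithmetic core of the argument. -/
private lemma arith_core (C η D dxx Td Te TLd TLe G L m' ε : ℝ)
    (hC1 : 1 ≤ C) (hη : 0 < η) (hεη : ε = 4 * C * η) (hD0 : 0 ≤ D)
    (hdxx : dxx < D + η)
    (hm1 : 1 ≤ m') (hLm : m' ≤ L) (hLC : L ≤ C * m')
    (hTLe0 : 0 ≤ TLe)
    (lb2 : (D - η) * L < TLd) (ub2 : TLd < (D + η) * L)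
    (e3 : TLe < η * L)
    (hsplit : Td + G = TLd)
    (hgap : G ≤ (L - m') * (D + η) + TLe)
    (hupper : Td ≤ m' * dxx + Te)
    (hTeLe : Te ≤ TLe) :
    |Td / m' - D| < ε := by
  subst hεη
  have hmpos : (0:ℝ) < m' := by linarith
  have hCpos : (0:ℝ) < C := by linarith
  have hLη : L * η ≤ C * m' * η := mul_le_mul_of_nonneg_right hLC hη.le
  have key_low : (D - 4 * C * η) * m' < Td := by nlinarith
  have key_high : Td < (D + 4 * C * η) * m' := by
    have h1 : m' * dxx < m' * (D + η) := mul_lt_mul_of_pos_left hdxx hmpos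
    nlinarith
  rw [abs_lt]
  constructor
  · have h := (lt_div_iff₀ hmpos).mpr key_low
    linarith
  · have h := (div_lt_iff₀ hmpos).mpr key_high
    linarith

/-- Main analytic lemma: C_l summability (with l(m) ≥ m and l(m) ≤ C m eventually)
implies ordinary Cesàro summability, for Wijsman distances. -/
private lemma cesaro_aux {X : Type*} [MetricSpace X] (A : ℕ → Set X) (S : Set X)
    (hS : S.Nonempty)
    (l : ℕ → ℕ) (hlm : ∀ m, m ≤ l m) (C : ℝ) (hC1 : 1 ≤ C)
    (hC : ∀ᶠ m in atTop, (l m : ℝ) ≤ C * m)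
    (H : ∀ x : X, Tendsto
      (fun n => (1 / (l n : ℝ)) * ∑ k ∈ Finset.Icc 1 (l n), infDist x (A k))
      atTop (nhds (infDist x S))) :
    ∀ x : X, Tendsto
      (fun m : ℕ => (1 / (m : ℝ)) * ∑ k ∈ Finset.Icc 1 m, infDist x (A k))
      atTop (nhds (infDist x S)) := by
  intro x
  have hD0 : 0 ≤ infDist x S := infDist_nonneg
  rw [Metric.tendsto_nhds]
  intro ε hε
  have hCpos : (0:ℝ) < C := lt_of_lt_of_le one_pos hC1
  have hηpos : 0 < ε / (4 * C) := by positivity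
  have hεη : ε = 4 * C * (ε / (4 * C)) := by field_simp
  obtain ⟨x₀, hx₀S, hx₀d⟩ : ∃ y ∈ S, dist x y < infDist x S + ε / (4 * C) := by
    rw [← Metric.infDist_lt_iff hS]
    linarith
  have hx₀zero : infDist x₀ S = 0 := infDist_zero_of_mem hx₀S
  have E2 : ∀ᶠ m in atTop,
      dist ((1 / (l m : ℝ)) * ∑ k ∈ Finset.Icc 1 (l m), infDist x (A k)) (infDist x S)
        < ε / (4 * C) :=
    Metric.tendsto_nhds.mp (H x) _ hηpos
  have E3 : ∀ᶠ m in atTop,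
      dist ((1 / (l m : ℝ)) * ∑ k ∈ Finset.Icc 1 (l m), infDist x₀ (A k)) 0 < ε / (4 * C) := by
    have h := Metric.tendsto_nhds.mp (H x₀) _ hηpos
    rwa [hx₀zero] at h
  filter_upwards [hC, E2, E3, eventually_ge_atTop 1] with m h1 h2 h3 h4
  have hm1 : (1:ℝ) ≤ (m : ℝ) := Nat.one_le_cast.mpr h4
  have hmpos : (0:ℝ) < (m : ℝ) := by linarith
  have hLm : ((m : ℝ)) ≤ ((l m : ℝ)) := Nat.cast_le.mpr (hlm m)
  have hLpos : (0:ℝ) < ((l m : ℝ)) := by linarith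
  have hTLe0 : 0 ≤ ∑ k ∈ Finset.Icc 1 (l m), infDist x₀ (A k) :=
    Finset.sum_nonneg fun k _ => infDist_nonneg
  -- bounds from h2
  have h2' : |(1 / (l m : ℝ)) * (∑ k ∈ Finset.Icc 1 (l m), infDist x (A k)) - infDist x S|
      < ε / (4 * C) := by rwa [Real.dist_eq] at h2
  have h2' := abs_lt.mp h2'
  have lb2 : (infDist x S - ε / (4 * C)) * (l m : ℝ)
      < ∑ k ∈ Finset.Icc 1 (l m), infDist x (A k) := by
    have h := h2'.1
    rw [one_div, inv_mul_eq_div] at h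
    have h' : infDist x S - ε / (4 * C)
        < (∑ k ∈ Finset.Icc 1 (l m), infDist x (A k)) / (l m : ℝ) := by linarith
    exact (lt_div_iff₀ hLpos).mp h'
  have ub2 : (∑ k ∈ Finset.Icc 1 (l m), infDist x (A k))
      < (infDist x S + ε / (4 * C)) * (l m : ℝ) := by
    have h := h2'.2
    rw [one_div, inv_mul_eq_div] at h
    have h' : (∑ k ∈ Finset.Icc 1 (l m), infDist x (A k)) / (l m : ℝ)
        < infDist x S + ε / (4 * C) := by linarith
    exact (div_lt_iff₀ hLpos).mp h'
  -- bound from h3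
  have h3' : |(1 / (l m : ℝ)) * ∑ k ∈ Finset.Icc 1 (l m), infDist x₀ (A k)|
      < ε / (4 * C) := by rwa [Real.dist_eq, sub_zero] at h3
  have h3' := abs_lt.mp h3'
  have e3 : (∑ k ∈ Finset.Icc 1 (l m), infDist x₀ (A k)) < ε / (4 * C) * (l m : ℝ) := by
    have h := h3'.2
    rw [one_div, inv_mul_eq_div] at h
    exact (div_lt_iff₀ hLpos).mp h
  -- split the long sum
  have hsplit : (∑ k ∈ Finset.Icc 1 m, infDist x (A k))
      + (∑ k ∈ Finset.Ioc m (l m), infDist x (A k))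
      = ∑ k ∈ Finset.Icc 1 (l m), infDist x (A k) := by
    rw [icc_eq_ioc, icc_eq_ioc]
    exact Finset.sum_Ioc_consecutive _ (Nat.zero_le m) (hlm m)
  -- gap bound
  have hgap : (∑ k ∈ Finset.Ioc m (l m), infDist x (A k))
      ≤ ((l m : ℝ) - (m : ℝ)) * (infDist x S + ε / (4 * C))
        + ∑ k ∈ Finset.Icc 1 (l m), infDist x₀ (A k) := by
    have step1 : (∑ k ∈ Finset.Ioc m (l m), infDist x (A k))
        ≤ ∑ k ∈ Finset.Ioc m (l m), (infDist x₀ (A k) + dist x x₀) :=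
      Finset.sum_le_sum fun k _ => infDist_le_infDist_add_dist
    have step2 : ∑ k ∈ Finset.Ioc m (l m), (infDist x₀ (A k) + dist x x₀)
        = (∑ k ∈ Finset.Ioc m (l m), infDist x₀ (A k))
          + ((l m : ℝ) - (m : ℝ)) * dist x x₀ := by
      rw [Finset.sum_add_distrib, Finset.sum_const, Nat.card_Ioc, nsmul_eq_mul,
        Nat.cast_sub (hlm m)]
    have step3 : (∑ k ∈ Finset.Ioc m (l m), infDist x₀ (A k))
        ≤ ∑ k ∈ Finset.Icc 1 (l m), infDist x₀ (A k) := by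
      rw [icc_eq_ioc]
      exact Finset.sum_le_sum_of_subset_of_nonneg
        (Finset.Ioc_subset_Ioc (Nat.zero_le m) le_rfl) (fun k _ _ => infDist_nonneg)
    have step4 : ((l m : ℝ) - (m : ℝ)) * dist x x₀
        ≤ ((l m : ℝ) - (m : ℝ)) * (infDist x S + ε / (4 * C)) :=
      mul_le_mul_of_nonneg_left hx₀d.le (by linarith)
    linarith
  -- upper bound
  have hupper : (∑ k ∈ Finset.Icc 1 m, infDist x (A k))
      ≤ (m : ℝ) * dist x x₀ + ∑ k ∈ Finset.Icc 1 m, infDist x₀ (A k) := by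
    have step1 : (∑ k ∈ Finset.Icc 1 m, infDist x (A k))
        ≤ ∑ k ∈ Finset.Icc 1 m, (infDist x₀ (A k) + dist x x₀) :=
      Finset.sum_le_sum fun k _ => infDist_le_infDist_add_dist
    have step2 : ∑ k ∈ Finset.Icc 1 m, (infDist x₀ (A k) + dist x x₀)
        = (∑ k ∈ Finset.Icc 1 m, infDist x₀ (A k)) + (m : ℝ) * dist x x₀ := by
      rw [Finset.sum_add_distrib, Finset.sum_const, Nat.card_Icc, nsmul_eq_mul]
      norm_num
    linarith
  have hTeLe : (∑ k ∈ Finset.Icc 1 m, infDist x₀ (A k))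
      ≤ ∑ k ∈ Finset.Icc 1 (l m), infDist x₀ (A k) := by
    rw [icc_eq_ioc, icc_eq_ioc]
    exact Finset.sum_le_sum_of_subset_of_nonneg
      (Finset.Ioc_subset_Ioc le_rfl (hlm m)) (fun k _ _ => infDist_nonneg)
  rw [Real.dist_eq, one_div, inv_mul_eq_div]
  exact arith_core C (ε / (4 * C)) (infDist x S) (dist x x₀)
    (∑ k ∈ Finset.Icc 1 m, infDist x (A k)) (∑ k ∈ Finset.Icc 1 m, infDist x₀ (A k))
    (∑ k ∈ Finset.Icc 1 (l m), infDist x (A k)) (∑ k ∈ Finset.Icc 1 (l m), infDist x₀ (A k))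
    (∑ k ∈ Finset.Ioc m (l m), infDist x (A k)) ((l m : ℝ)) ((m : ℝ)) ε
    hC1 hηpos hεη hD0 hx₀d hm1 hLm h1 hTLe0 lb2 ub2 e3 hsplit hgap hupper hTeLe

/-- Easy direction: ordinary Cesàro summability implies C_l summability. -/
private lemma cesaro_comp {X : Type*} [MetricSpace X] (A : ℕ → Set X) (S : Set X)
    (l : ℕ → ℕ) (hl : StrictMono l)
    (H : ∀ x : X, Tendsto
      (fun m : ℕ => (1 / (m : ℝ)) * ∑ k ∈ Finset.Icc 1 m, infDist x (A k))
      atTop (nhds (infDist x S))) :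
    ∀ x : X, Tendsto
      (fun n => (1 / (l n : ℝ)) * ∑ k ∈ Finset.Icc 1 (l n), infDist x (A k))
      atTop (nhds (infDist x S)) := by
  intro x
  exact (H x).comp hl.tendsto_atTop

/-- From the liminf hypothesis, extract a linear upper bound on l. -/
private lemma extract_C (l : ℕ → ℕ) (hl : StrictMono l)
    (hliml : 0 < Filter.liminf (fun (n : ℕ) => (n : ℝ) / (l n : ℝ)) atTop) :
    ∃ C : ℝ, 1 ≤ C ∧ ∀ᶠ m in atTop, (l m : ℝ) ≤ C * m := by
  set δ := Filter.liminf (fun (n : ℕ) => (n : ℝ) / (l n : ℝ)) atTop with hδ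
  have hbdd : IsBoundedUnder (· ≥ ·) atTop (fun (n : ℕ) => (n : ℝ) / (l n : ℝ)) :=
    Filter.isBoundedUnder_of ⟨0, fun n => div_nonneg (Nat.cast_nonneg _) (Nat.cast_nonneg _)⟩
  have hev : ∀ᶠ n : ℕ in atTop, δ / 2 < (n : ℝ) / (l n : ℝ) :=
    eventually_lt_of_lt_liminf (by linarith) hbdd
  refine ⟨max (2 / δ) 1, le_max_right _ _, ?_⟩
  filter_upwards [hev, eventually_ge_atTop 1] with n hn hn1
  have h1n : 1 ≤ l n := le_trans hn1 hl.le_apply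
  have hlpos : (0:ℝ) < (l n : ℝ) := by exact_mod_cast Nat.lt_of_lt_of_le Nat.zero_lt_one h1n
  have hδ2 : (0:ℝ) < δ / 2 := by linarith
  have hlt : δ / 2 * (l n : ℝ) < n := (lt_div_iff₀ hlpos).mp hn
  have h2 : (l n : ℝ) < 2 / δ * n := by
    rw [div_mul_eq_mul_div, lt_div_iff₀ (by linarith : (0:ℝ) < δ)]
    nlinarith
  calc (l n : ℝ) ≤ 2 / δ * n := h2.le
  _ ≤ max (2 / δ) 1 * n :=
      mul_le_mul_of_nonneg_right (le_max_left _ _) (Nat.cast_nonneg n)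

theorem stmt_13 {X : Type*} [MetricSpace X] (A : ℕ → Set X) (S : Set X)
    (hA : ∀ k, (A k).Nonempty ∧ IsClosed (A k)) (hS : S.Nonempty) (hSc : IsClosed S)
    (hbdd : ∀ x : X, ∃ M : ℝ, ∀ k, infDist x (A k) ≤ M)
    (l μ : ℕ → ℕ) (hl : StrictMono l) (hl1 : ∀ n, 1 ≤ l n)
    (hμ : StrictMono μ) (hμ1 : ∀ n, 1 ≤ μ n)
    (hliml : 0 < Filter.liminf (fun (n : ℕ) => (n : ℝ) / (l n : ℝ)) atTop)
    (hlimμ : 0 < Filter.liminf (fun (n : ℕ) => (n : ℝ) / (μ n : ℝ)) atTop) :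
    (∀ x : X, Tendsto
      (fun n => (1 / (l n : ℝ)) * ∑ k ∈ Finset.Icc 1 (l n), infDist x (A k))
      atTop (nhds (infDist x S))) ↔
    (∀ x : X, Tendsto
      (fun n => (1 / (μ n : ℝ)) * ∑ k ∈ Finset.Icc 1 (μ n), infDist x (A k))
      atTop (nhds (infDist x S))) := by
  obtain ⟨Cl, hCl1, hCl⟩ := extract_C l hl hliml
  obtain ⟨Cμ, hCμ1, hCμ⟩ := extract_C μ hμ hlimμ
  constructor
  · intro H
    exact cesaro_comp A S μ hμ
      (cesaro_aux A S hS l (fun m => hl.le_apply) Cl hCl1 hCl H)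
  · intro H
    exact cesaro_comp A S l hl
      (cesaro_aux A S hS μ (fun m => hμ.le_apply) Cμ hCμ1 hCμ H)
end
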